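/- Let p be a prime, let k be the algebraic closure of the field with p elements, and let f ∈ k[[z]] be the formal power series f = ∑_{l=0}^∞ z^(p^(p^l)) (i.e., the power series whose m-th coefficient is 1 if m = p^(p^l) for some l ≥ 0 and 0 otherwise). Then the two elements z and f of k[[z]] are algebraically independent over k; equivalently, f is transcendental over the rational function field K = k(z). -/

import Mathlib

set_option linter.unusedSectionVars false
set_option maxHeartbeats 1000000
set_option synthInstance.maxHeartbeats 400000

open PowerSeries
open scoped Classical

section Aux

variable {K : Type*} [Field K] {p : ℕ} [hp : Fact p.Prime] [CharP K p]

theorem coeff_pow_char' (g : PowerSeries K) (n : ℕ) :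
    coeff n (g ^ p) = if p ∣ n then (coeff (n / p) g) ^ p else 0 := by
  have hp0 : 0 < p := hp.out.pos
  set t := trunc (n+1) g with ht
  have h1 : coeff n (g ^ p) = Polynomial.coeff (t ^ p) n := by
    calc coeff n (g ^ p) = Polynomial.coeff (trunc (n+1) (g^p)) n := by
          rw [coeff_trunc]; simp [Nat.lt_succ_self]
      _ = Polynomial.coeff (trunc (n+1) ((t : PowerSeries K)^p)) n := by
          rw [ht, trunc_trunc_pow]
      _ = coeff n ((t : PowerSeries K)^p) := by rw [coeff_trunc]; simp [Nat.lt_succ_self]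
      _ = coeff n (((t^p : Polynomial K) : PowerSeries K)) := by rw [Polynomial.coe_pow]
      _ = Polynomial.coeff (t ^ p) n := Polynomial.coeff_coe _ _
  rw [h1, ← Polynomial.map_frobenius_expand p, Polynomial.coeff_map, Polynomial.coeff_expand hp0]
  have h2 : t.coeff (n / p) = coeff (n / p) g := by
    rw [ht, coeff_trunc, if_pos (Nat.lt_succ_of_le (Nat.div_le_self n p))]
  split
  · rw [frobenius_def, h2]
  · rw [map_zero]

end Aux

/-- The series `∑ₗ z^(p^(p^l + i))`. -/
noncomputable def FF (K : Type*) [Field K] (p i : ℕ) : PowerSeries K :=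
  PowerSeries.mk fun m => if ∃ l : ℕ, m = p ^ (p ^ l + i) then 1 else 0

section Aux2

variable {K : Type*} [Field K] {p : ℕ} [hp : Fact p.Prime] [CharP K p]

theorem coeff_FF (i m : ℕ) :
    coeff m (FF K p i) = if ∃ l : ℕ, m = p ^ (p ^ l + i) then 1 else 0 :=
  coeff_mk _ _

theorem FF_pow (i : ℕ) : FF K p i ^ p = FF K p (i + 1) := by
  have hp1 : 1 < p := hp.out.one_lt
  ext m
  rw [coeff_pow_char', coeff_FF]
  by_cases hd : p ∣ m
  · rw [if_pos hd, coeff_FF]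
    simp only [← add_assoc]
    have hiff : (∃ l : ℕ, m / p = p ^ (p ^ l + i)) ↔ (∃ l : ℕ, m = p ^ (p ^ l + i + 1)) := by
      obtain ⟨c, rfl⟩ := hd
      rw [Nat.mul_div_cancel_left c hp.out.pos]
      constructor
      · rintro ⟨l, rfl⟩; exact ⟨l, by rw [pow_succ, mul_comm]⟩
      · rintro ⟨l, h⟩
        refine ⟨l, ?_⟩
        have : p * c = p * p ^ (p ^ l + i) := by rw [h, pow_succ, mul_comm]
        exact Nat.eq_of_mul_eq_mul_left hp.out.pos this
    by_cases h : ∃ l : ℕ, m / p = p ^ (p ^ l + i)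
    · rw [if_pos h, if_pos (hiff.mp h), one_pow]
    · rw [if_neg h, if_neg (fun hc => h (hiff.mpr hc)), zero_pow hp.out.ne_zero]
  · rw [if_neg hd, coeff_FF, eq_comm, if_neg]
    rintro ⟨l, rfl⟩
    exact hd (dvd_pow_self p (Nat.succ_ne_zero _))

theorem f_pow (f : PowerSeries K)
    (hf : ∀ m : ℕ, coeff m f = if ∃ l : ℕ, m = p ^ (p ^ l) then 1 else 0) (i : ℕ) :
    f ^ (p ^ i) = FF K p i := by
  induction i with
  | zero =>
    rw [pow_zero, pow_one]
    ext m
    rw [hf, coeff_FF]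
    simp
  | succ i ih =>
    rw [pow_succ, pow_mul, ih, FF_pow]

theorem key {N : ℕ} (c : Fin N → Polynomial K)
    (hrel : ∑ i : Fin N, (c i : PowerSeries K) * FF K p (i : ℕ) = 0) (i₀ : Fin N) :
    c i₀ = 0 := by
  by_contra hc
  have hp1 : 1 < p := hp.out.one_lt
  have hp0 : 1 ≤ p := hp.out.one_le
  set H : ℕ := Finset.univ.sup fun i : Fin N => (c i).natDegree with hH
  set j : ℕ := (c i₀).natDegree with hjdef
  have hj : (c i₀).coeff j ≠ 0 := by
    rw [hjdef, ← Polynomial.leadingCoeff, Polynomial.leadingCoeff_ne_zero]; exact hc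
  have hjH : j ≤ H := by
    simpa using Finset.le_sup (f := fun i : Fin N => (c i).natDegree) (Finset.mem_univ i₀)
  have hcoeffH : ∀ (i : Fin N) (u : ℕ), (c i).coeff u ≠ 0 → u ≤ H := by
    intro i u hu
    refine le_trans (Polynomial.le_natDegree_of_ne_zero hu) ?_
    simpa using Finset.le_sup (f := fun i : Fin N => (c i).natDegree) (Finset.mem_univ i)
  set l : ℕ := N + H + j + 2 with hl
  have hlpow : l < p ^ l := Nat.lt_pow_self hp1
  have hlpow1 : l - 1 < p ^ (l - 1) := Nat.lt_pow_self hp1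
  set a : ℕ := p ^ l + (i₀ : ℕ) with ha
  set A : ℕ := p ^ a with hA
  set M : ℕ := A + j with hM
  have hi₀N : (i₀ : ℕ) < N := i₀.isLt
  have hla : l ≤ a - 1 := by
    have : l + 1 ≤ p ^ l := hlpow
    omega
  have hpl1 : p ^ (l - 1) ≤ p ^ l := Nat.pow_le_pow_right hp0 (by omega)
  have hNl : N < p ^ (l - 1) := by omega
  have hdouble : ∀ m : ℕ, 1 ≤ m → p ^ (m - 1) + p ^ (m - 1) ≤ p ^ m := by
    intro m hm
    have h1 : p ^ m = p ^ (m - 1) * p := by rw [← pow_succ]; congr 1; omega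
    nlinarith [pow_pos (by omega : 0 < p) (m-1)]
  have star : ∀ (i : Fin N) (u b : ℕ), u ≤ H → u + p ^ (p ^ b + (i : ℕ)) = M →
      i = i₀ ∧ u = j ∧ b = l := by
    intro i u b hu heq
    set e : ℕ := p ^ b + (i : ℕ) with he
    have hea : e = a := by
      rcases lt_trichotomy e a with h | h | h
      · have f1 : p ^ e ≤ p ^ (a - 1) := Nat.pow_le_pow_right hp0 (by omega)
        have f3 : p ^ l ≤ p ^ (a - 1) := Nat.pow_le_pow_right hp0 hla
        have f2 := hdouble a (by omega)
        omega
      · exact h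
      · have f1 : p ^ (a + 1) ≤ p ^ e := Nat.pow_le_pow_right hp0 (by omega)
        have f2 : p ^ a + p ^ a ≤ p ^ (a + 1) := by
          have := hdouble (a + 1) (by omega)
          simpa using this
        have f3 : p ^ l ≤ p ^ a := Nat.pow_le_pow_right hp0 (by omega)
        omega
    have hbl : b = l := by
      rcases lt_trichotomy b l with h | h | h
      · have f1 : p ^ b ≤ p ^ (l - 1) := Nat.pow_le_pow_right hp0 (by omega)
        have hiN : (i : ℕ) < N := i.isLt
        have f2 := hdouble l (by omega)
        omega
      · exact h
      · have f1 : p ^ (l + 1) ≤ p ^ b := Nat.pow_le_pow_right hp0 (by omega)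
        have f2 : p ^ l + p ^ l ≤ p ^ (l + 1) := by simpa using hdouble (l + 1) (by omega)
        omega
    subst hbl
    have hii : i = i₀ := by
      apply Fin.ext
      omega
    have hue : u = j := by
      rw [hea] at heq
      omega
    exact ⟨hii, hue, rfl⟩
  have hcoeffM := congrArg (coeff M) hrel
  rw [map_sum, map_zero] at hcoeffM
  have hterm : ∀ i : Fin N,
      coeff M ((c i : PowerSeries K) * FF K p (i : ℕ)) =
        if i = i₀ then (c i₀).coeff j else 0 := by
    intro i
    rw [coeff_mul]
    by_cases hii : i = i₀
    · subst hii
      rw [if_pos rfl]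
      have hmemJA : ((j, A) : ℕ × ℕ) ∈ Finset.HasAntidiagonal.antidiagonal M := by
        rw [Finset.HasAntidiagonal.mem_antidiagonal]; omega
      have hothers : ∀ q ∈ Finset.HasAntidiagonal.antidiagonal M, q ≠ ((j, A) : ℕ × ℕ) →
          coeff q.1 ((c i : PowerSeries K)) * coeff q.2 (FF K p (i : ℕ)) = 0 := by
        rintro ⟨u, v⟩ hmem hne
        rw [Finset.HasAntidiagonal.mem_antidiagonal] at hmem
        simp only [Polynomial.coeff_coe, coeff_FF]
        by_cases hcu : (c i).coeff u = 0
        · rw [hcu, zero_mul]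
        by_cases hex : ∃ b : ℕ, v = p ^ (p ^ b + (i : ℕ))
        · obtain ⟨b, rfl⟩ := hex
          obtain ⟨h1, h2, h3⟩ := star i u b (hcoeffH i u hcu) (by omega)
          exfalso; apply hne
          subst h2 h3
          rfl
        · rw [if_neg hex, mul_zero]
      calc (∑ q ∈ Finset.HasAntidiagonal.antidiagonal M,
              coeff q.1 ((c i : PowerSeries K)) * coeff q.2 (FF K p (i : ℕ)))
          = coeff j ((c i : PowerSeries K)) * coeff A (FF K p (i : ℕ)) :=
            Finset.sum_eq_single_of_mem _ hmemJA hothers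
        _ = (c i).coeff j := by
            simp only [Polynomial.coeff_coe, coeff_FF]
            rw [if_pos ⟨l, rfl⟩, mul_one]
    · rw [if_neg hii]
      apply Finset.sum_eq_zero
      rintro ⟨u, v⟩ hmem
      rw [Finset.HasAntidiagonal.mem_antidiagonal] at hmem
      simp only [Polynomial.coeff_coe, coeff_FF]
      by_cases hcu : (c i).coeff u = 0
      · rw [hcu, zero_mul]
      by_cases hex : ∃ b : ℕ, v = p ^ (p ^ b + (i : ℕ))
      · obtain ⟨b, rfl⟩ := hex
        obtain ⟨h1, -, -⟩ := star i u b (hcoeffH i u hcu) (by omega)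
        exact absurd h1 hii
      · rw [if_neg hex, mul_zero]
  rw [Finset.sum_congr rfl (fun i _ => hterm i)] at hcoeffM
  rw [Finset.sum_ite_eq' Finset.univ i₀ fun _ => (c i₀).coeff j] at hcoeffM
  rw [if_pos (Finset.mem_univ i₀)] at hcoeffM
  exact hj hcoeffM

end Aux2

section Main
variable {K : Type*} [Field K] {p : ℕ} [hp : Fact p.Prime] [CharP K p]

theorem main_general (f : PowerSeries K)
    (hf : ∀ m : ℕ, coeff m f = if ∃ l : ℕ, m = p ^ (p ^ l) then 1 else 0) :
    AlgebraicIndependent K ![(X : PowerSeries K), f] := by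
  -- Step 1 : X is transcendental over K
  have hXaeval : ∀ q : Polynomial K, Polynomial.aeval (X : PowerSeries K) q = (q : PowerSeries K) := by
    intro q
    have hXC : algebraMap K (PowerSeries K) = (C : K →+* PowerSeries K) := rfl
    rw [Polynomial.aeval_def, hXC, Polynomial.eval₂_C_X_eq_coe]
  have hXtr : Transcendental K (X : PowerSeries K) := by
    rw [transcendental_iff]
    intro q hq
    rw [hXaeval] at hq
    exact Polynomial.coe_eq_zero_iff.mp hq
  have h1 : AlgebraicIndependent K ![(X : PowerSeries K)] :=
    algebraicIndependent_iff_transcendental.mpr hXtr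
  -- Step 2 : f is transcendental over K[z]
  have hmain : Transcendental (Algebra.adjoin K (Set.range ![(X : PowerSeries K)])) f := by
    set A := Algebra.adjoin K (Set.range ![(X : PowerSeries K)]) with hAdef
    intro halg
    obtain ⟨P, hP0, hPf⟩ := halg
    -- every element of A is a polynomial in X
    have hmemA : ∀ a : A, ∃ q : Polynomial K, (q : PowerSeries K) = (a : PowerSeries K) := by
      intro a
      have ha : (a : PowerSeries K) ∈ Algebra.adjoin K ({(X : PowerSeries K)} : Set _) := by
        have hr : Set.range ![(X : PowerSeries K)] = {(X : PowerSeries K)} := by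
          simp [Matrix.range_cons, Matrix.range_empty]
        rw [← hr]; exact a.2
      rw [Algebra.adjoin_singleton_eq_range_aeval] at ha
      obtain ⟨q, hq⟩ := ha
      have hq' : Polynomial.aeval (X : PowerSeries K) q = (a : PowerSeries K) := hq
      exact ⟨q, by rw [← hq', hXaeval]⟩
    choose q hq using hmemA
    -- the polynomial relation over K[z], in the shape of a polynomial in a second variable
    set P' : Polynomial (Polynomial K) :=
      ∑ n ∈ P.support, Polynomial.monomial n (q (P.coeff n)) with hP'def
    have hP'coeff : ∀ n, P'.coeff n = if n ∈ P.support then q (P.coeff n) else 0 := by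
      intro n
      rw [hP'def, Polynomial.finset_sum_coeff]
      by_cases hn : n ∈ P.support
      · rw [if_pos hn]
        rw [Finset.sum_eq_single n (fun m _ hm => by
          rw [Polynomial.coeff_monomial]; rw [if_neg]; intro h
          first | exact hm h | exact hm h.symm) (fun hmem => absurd hn hmem)]
        rw [Polynomial.coeff_monomial, if_pos rfl]
      · rw [if_neg hn]
        apply Finset.sum_eq_zero
        intro m hm
        rw [Polynomial.coeff_monomial, if_neg]
        intro h
        exact hn (h ▸ hm)
    have hqne : ∀ n ∈ P.support, q (P.coeff n) ≠ 0 := by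
      intro n hn hqn
      apply Polynomial.mem_support_iff.mp hn
      have hz : ((P.coeff n : A) : PowerSeries K) = 0 := by
        rw [← hq (P.coeff n), hqn, Polynomial.coe_zero]
      exact Subtype.ext (by simpa using hz)
    have hP'0 : P' ≠ 0 := by
      obtain ⟨n, hn⟩ : ∃ n, n ∈ P.support := by
        rcases Finset.eq_empty_or_nonempty P.support with h | ⟨n, hn⟩
        · exact absurd (Polynomial.support_eq_empty.mp h) hP0
        · exact ⟨n, hn⟩
      intro h0
      apply hqne n hn
      have hcn := hP'coeff n
      rw [h0, Polynomial.coeff_zero, if_pos hn] at hcn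
      exact hcn.symm
    -- the relation, rewritten with polynomial coefficients
    have hrel : ∑ n ∈ P.support, ((q (P.coeff n) : PowerSeries K)) * f ^ n = 0 := by
      have h := hPf
      rw [Polynomial.aeval_def, Polynomial.eval₂_eq_sum, Polynomial.sum_def] at h
      rw [← h]
      apply Finset.sum_congr rfl
      intro n _
      rw [hq]
      rfl
    set D := P'.natDegree with hDdef
    have hQD : P'.coeff D ≠ 0 := by
      rw [hDdef, ← Polynomial.leadingCoeff, Polynomial.leadingCoeff_ne_zero]
      exact hP'0
    have hrel2 : ∑ n ∈ Finset.range (D + 1), ((P'.coeff n : PowerSeries K)) * f ^ n = 0 := by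
      have e1 : Polynomial.eval₂ Polynomial.coeToPowerSeries.ringHom f P' =
          ∑ n ∈ Finset.range (D + 1), ((P'.coeff n : PowerSeries K)) * f ^ n := by
        rw [Polynomial.eval₂_eq_sum_range]
        apply Finset.sum_congr rfl
        intro n _
        rw [Polynomial.coeToPowerSeries.ringHom_apply]
      have e2 : Polynomial.eval₂ Polynomial.coeToPowerSeries.ringHom f P' =
          ∑ n ∈ P.support, ((q (P.coeff n) : PowerSeries K)) * f ^ n := by
        rw [hP'def, Polynomial.eval₂_finset_sum]
        apply Finset.sum_congr rfl
        intro n _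
        rw [Polynomial.eval₂_monomial, Polynomial.coeToPowerSeries.ringHom_apply]
      rw [← e1, e2, hrel]
    have hD1 : 1 ≤ D := by
      by_contra hD0
      have hD00 : D = 0 := by omega
      rw [hD00, Finset.sum_range_one, pow_zero, mul_one] at hrel2
      rw [hD00] at hQD
      exact hQD (Polynomial.coe_eq_zero_iff.mp hrel2)
    have hfD : (P'.coeff D : PowerSeries K) * f ^ D =
        - ∑ n ∈ Finset.range D, ((P'.coeff n : PowerSeries K)) * f ^ n := by
      have h := hrel2
      rw [Finset.sum_range_succ, add_comm] at h
      exact eq_neg_of_add_eq_zero_left h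
    have hrange : Finset.range D = Finset.range ((D - 1) + 1) := by
      congr 1; omega
    -- representation lemma: (Q D)^m * f^m is a combination of 1, f, ..., f^(D-1)
    have rep : ∀ m : ℕ, ∃ v : ℕ → Polynomial K,
        ((P'.coeff D ^ m : Polynomial K) : PowerSeries K) * f ^ m =
          ∑ k ∈ Finset.range D, ((v k : PowerSeries K)) * f ^ k := by
      intro m
      induction m with
      | zero =>
        refine ⟨fun k => if k = 0 then 1 else 0, ?_⟩
        rw [pow_zero, pow_zero, Polynomial.coe_one, one_mul,
          Finset.sum_eq_single_of_mem 0 (Finset.mem_range.mpr hD1)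
            (fun k _ hk => by simp [hk])]
        simp
      | succ m ih =>
        obtain ⟨v, hv⟩ := ih
        refine ⟨fun k => (if 1 ≤ k then P'.coeff D * v (k - 1) else 0) -
          v (D - 1) * P'.coeff k, ?_⟩
        have hD' : D - 1 + 1 = D := by omega
        calc ((P'.coeff D ^ (m+1) : Polynomial K) : PowerSeries K) * f ^ (m+1)
            = (P'.coeff D : PowerSeries K) *
                (((P'.coeff D ^ m : Polynomial K) : PowerSeries K) * f ^ m) * f := by
              push_cast; ring
          _ = (P'.coeff D : PowerSeries K) *
                (∑ k ∈ Finset.range D, ((v k : PowerSeries K)) * f ^ k) * f := by rw [hv]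
          _ = ∑ k ∈ Finset.range D,
                ((P'.coeff D * v k : Polynomial K) : PowerSeries K) * f ^ (k + 1) := by
              rw [Finset.mul_sum, Finset.sum_mul]
              refine Finset.sum_congr rfl fun k _ => ?_
              push_cast; ring
          _ = (∑ k ∈ Finset.range (D - 1),
                  ((P'.coeff D * v k : Polynomial K) : PowerSeries K) * f ^ (k + 1))
                + ((P'.coeff D * v (D-1) : Polynomial K) : PowerSeries K) * f ^ ((D-1) + 1) := by
              rw [hrange]
              exact Finset.sum_range_succ _ _
          _ = (∑ k ∈ Finset.range (D - 1),
                  ((P'.coeff D * v k : Polynomial K) : PowerSeries K) * f ^ (k + 1))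
                + (v (D-1) : PowerSeries K) *
                    (- ∑ n ∈ Finset.range D, ((P'.coeff n : PowerSeries K)) * f ^ n) := by
              congr 1
              rw [hD', ← hfD]
              push_cast; ring
          _ = (∑ k ∈ Finset.range D,
                  (((if 1 ≤ k then P'.coeff D * v (k - 1) else 0 : Polynomial K)) :
                    PowerSeries K) * f ^ k)
                - (v (D-1) : PowerSeries K) *
                    ∑ n ∈ Finset.range D, ((P'.coeff n : PowerSeries K)) * f ^ n := by
              rw [mul_neg, ← sub_eq_add_neg]
              congr 1
              symm
              rw [hrange, Finset.sum_range_succ']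
              simp only [Nat.add_sub_cancel]
              have hG0 : (((if (1:ℕ) ≤ 0 then P'.coeff D * v (0 - 1) else 0 : Polynomial K)) :
                  PowerSeries K) * f ^ 0 = 0 := by simp
              rw [hG0, add_zero]
              refine Finset.sum_congr rfl fun k _ => ?_
              rw [if_pos (Nat.succ_le_succ (Nat.zero_le k))]
          _ = ∑ k ∈ Finset.range D,
                (((if 1 ≤ k then P'.coeff D * v (k - 1) else 0) -
                    v (D - 1) * P'.coeff k : Polynomial K) : PowerSeries K) * f ^ k := by
              rw [Finset.mul_sum, ← Finset.sum_sub_distrib]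
              refine Finset.sum_congr rfl fun k _ => ?_
              rw [Polynomial.coe_sub, Polynomial.coe_mul]
              ring
    -- uniform representation
    have repU : ∀ i : Fin (D + 1), ∃ w : ℕ → Polynomial K,
        ((P'.coeff D ^ (p ^ D) : Polynomial K) : PowerSeries K) * f ^ (p ^ (i : ℕ)) =
          ∑ k ∈ Finset.range D, ((w k : PowerSeries K)) * f ^ k := by
      intro i
      obtain ⟨v, hv⟩ := rep (p ^ (i : ℕ))
      refine ⟨fun k => P'.coeff D ^ (p ^ D - p ^ (i : ℕ)) * v k, ?_⟩
      have hle : p ^ (i : ℕ) ≤ p ^ D := Nat.pow_le_pow_right hp.out.one_le (by omega)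
      have hsplit : (P'.coeff D ^ (p ^ D) : Polynomial K) =
          P'.coeff D ^ (p ^ D - p ^ (i : ℕ)) * P'.coeff D ^ (p ^ (i : ℕ)) := by
        rw [← pow_add]
        congr 1
        omega
      rw [hsplit, Polynomial.coe_mul, mul_assoc, hv, Finset.mul_sum]
      apply Finset.sum_congr rfl
      intro k _
      push_cast
      ring
    choose w hw using repU
    -- linear algebra over RatFunc K
    set W : Fin (D + 1) → (Fin D → RatFunc K) := fun i k =>
      algebraMap (Polynomial K) (RatFunc K) (w i (k : ℕ)) with hW
    have hnli : ¬ LinearIndependent (RatFunc K) W := by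
      intro hli
      have hcard := hli.fintype_card_le_finrank
      rw [Fintype.card_fin, Module.finrank_fin_fun] at hcard
      omega
    obtain ⟨g, hg0, i₁, hgi₁⟩ := Fintype.not_linearIndependent_iff.mp hnli
    have hgk : ∀ k : ℕ, k < D →
        ∑ i : Fin (D + 1), g i * algebraMap (Polynomial K) (RatFunc K) (w i k) = 0 := by
      intro k hk
      have h := congrFun hg0 (⟨k, hk⟩ : Fin D)
      rw [Finset.sum_apply] at h
      simpa [hW] using h
    -- clear denominators
    set c : Fin (D + 1) → Polynomial K := fun i =>
      (g i).num * ∏ jj ∈ Finset.univ.erase i, (g jj).denom with hcdef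
    have hcg : ∀ i, algebraMap (Polynomial K) (RatFunc K) (c i) =
        g i * algebraMap (Polynomial K) (RatFunc K) (∏ jj : Fin (D + 1), (g jj).denom) := by
      intro i
      have hd0 : algebraMap (Polynomial K) (RatFunc K) (g i).denom ≠ 0 :=
        RatFunc.algebraMap_ne_zero (RatFunc.denom_ne_zero (g i))
      have hnum : algebraMap (Polynomial K) (RatFunc K) (g i).num =
          g i * algebraMap (Polynomial K) (RatFunc K) (g i).denom :=
        (div_eq_iff hd0).mp (RatFunc.num_div_denom (g i))
      rw [hcdef]
      rw [map_mul, map_prod, hnum, map_prod,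
        ← Finset.mul_prod_erase Finset.univ _ (Finset.mem_univ i)]
      ring
    have hc1 : c i₁ ≠ 0 := by
      rw [hcdef]
      refine mul_ne_zero (RatFunc.num_ne_zero hgi₁) (Finset.prod_ne_zero_iff.mpr ?_)
      exact fun jj _ => RatFunc.denom_ne_zero (g jj)
    have hkey0 : ∀ k : ℕ, k < D → ∑ i : Fin (D + 1), c i * w i k = 0 := by
      intro k hk
      apply IsFractionRing.injective (Polynomial K) (RatFunc K)
      rw [map_sum, map_zero]
      have : ∀ i ∈ (Finset.univ : Finset (Fin (D + 1))),
          algebraMap (Polynomial K) (RatFunc K) (c i * w i k) =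
            algebraMap (Polynomial K) (RatFunc K) (∏ jj : Fin (D + 1), (g jj).denom) *
              (g i * algebraMap (Polynomial K) (RatFunc K) (w i k)) := by
        intro i _
        rw [map_mul, hcg]
        ring
      rw [Finset.sum_congr rfl this, ← Finset.mul_sum, hgk k hk, mul_zero]
    -- the power series relation among the f^(p^i)
    have hbig : ((P'.coeff D ^ (p ^ D) : Polynomial K) : PowerSeries K) *
        ∑ i : Fin (D + 1), ((c i : PowerSeries K)) * f ^ (p ^ (i : ℕ)) = 0 := by
      rw [Finset.mul_sum]
      have e4 : ∀ i ∈ (Finset.univ : Finset (Fin (D + 1))),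
          ((P'.coeff D ^ (p ^ D) : Polynomial K) : PowerSeries K) *
              (((c i : PowerSeries K)) * f ^ (p ^ (i : ℕ))) =
            ((c i : PowerSeries K)) *
              ∑ k ∈ Finset.range D, ((w i k : PowerSeries K)) * f ^ k := by
        intro i _
        rw [← hw i]
        ring
      rw [Finset.sum_congr rfl e4]
      calc ∑ i : Fin (D + 1), ((c i : PowerSeries K)) *
              ∑ k ∈ Finset.range D, ((w i k : PowerSeries K)) * f ^ k
          = ∑ i : Fin (D + 1), ∑ k ∈ Finset.range D,
              ((c i : PowerSeries K)) * (((w i k : PowerSeries K)) * f ^ k) :=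
            Finset.sum_congr rfl fun i _ => Finset.mul_sum _ _ _
        _ = ∑ k ∈ Finset.range D, ∑ i : Fin (D + 1),
              ((c i : PowerSeries K)) * (((w i k : PowerSeries K)) * f ^ k) := Finset.sum_comm
        _ = ∑ k ∈ Finset.range D, (((∑ i : Fin (D + 1), c i * w i k : Polynomial K)) :
              PowerSeries K) * f ^ k := by
            refine Finset.sum_congr rfl fun k _ => ?_
            rw [← Polynomial.coeToPowerSeries.ringHom_apply, map_sum, Finset.sum_mul]
            refine Finset.sum_congr rfl fun i _ => ?_
            rw [map_mul, Polynomial.coeToPowerSeries.ringHom_apply,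
              Polynomial.coeToPowerSeries.ringHom_apply]
            ring
        _ = 0 := by
            refine Finset.sum_eq_zero fun k hk => ?_
            rw [hkey0 k (Finset.mem_range.mp hk), Polynomial.coe_zero, zero_mul]
    have hnz : ((P'.coeff D ^ (p ^ D) : Polynomial K) : PowerSeries K) ≠ 0 := by
      rw [Ne, Polynomial.coe_eq_zero_iff]
      exact pow_ne_zero _ hQD
    have hPS0 : ∑ i : Fin (D + 1), ((c i : PowerSeries K)) * f ^ (p ^ (i : ℕ)) = 0 :=
      (mul_eq_zero.mp hbig).resolve_left hnz
    have hPS : ∑ i : Fin (D + 1), ((c i : PowerSeries K)) * FF K p (i : ℕ) = 0 := by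
      rw [← hPS0]
      exact Finset.sum_congr rfl fun i _ => by rw [f_pow f hf]
    exact hc1 (key c hPS i₁)
  have h2 := (h1.option_iff_transcendental f).mpr hmain
  let e : Option (Fin 1) ≃ Fin 2 :=
    { toFun := fun o => o.elim 1 (fun _ => 0)
      invFun := fun i => if i = 0 then some 0 else none
      left_inv := by
        rintro (_ | i)
        · simp
        · simp [Subsingleton.elim (0 : Fin 1) i]
      right_inv := by intro i; fin_cases i <;> simp }
  have hcomp : (![(X : PowerSeries K), f]) ∘ e = fun o : Option (Fin 1) => o.elim f ![X] := by
    funext o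
    rcases o with _ | i
    · simp [e]
    · simp [e]
  exact (algebraicIndependent_equiv' e hcomp).mp h2
end Main

open PowerSeries Classical in
theorem transcendental_sum_pow_prime_tower (p : ℕ) (hp : Fact p.Prime)
    (f : PowerSeries (AlgebraicClosure (ZMod p)))
    (hf : ∀ m : ℕ, PowerSeries.coeff m f =
      if ∃ l : ℕ, m = p ^ (p ^ l) then 1 else 0) :
    AlgebraicIndependent (AlgebraicClosure (ZMod p))
      ![(PowerSeries.X : PowerSeries (AlgebraicClosure (ZMod p))), f] := by
  haveI := hp
  exact main_general f hf
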